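/- Let X be a complete separable metric space, Y a metric space, and f : X → Y a continuous map. Then the map K(X) × Y → K(X) defined by (K, y) ↦ K ∩ f^{-1}({y}) is Borel measurable. -/

import Mathlib

open MeasurableSpace MeasureTheory Set Metric TopologicalSpace

/-- The space of all compact subsets of `X` (including `∅`). -/
def KSpace (X : Type*) [TopologicalSpace X] : Type _ := { s : Set X // IsCompact s }

/-- The Borel σ-field of the Vietoris topology (equivalently, of the Hausdorff metric)
on the space of compact subsets: it is generated by the sets `{K : K ⊆ U}` and
`{K : K ∩ U ≠ ∅}`, `U` open in `X`. -/
def kBorel (X : Type*) [TopologicalSpace X] : MeasurableSpace (KSpace X) :=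
  MeasurableSpace.generateFrom
    { A | ∃ U : Set X, IsOpen U ∧
        (A = { K : KSpace X | K.1 ⊆ U } ∨ A = { K : KSpace X | (K.1 ∩ U).Nonempty }) }

/-- Hitting a closed set is measurable for `kBorel`. -/
lemma kBorel_hit_closed {X : Type*} [TopologicalSpace X] {C : Set X} (hC : IsClosed C) :
    MeasurableSet[kBorel X] {K : KSpace X | (K.1 ∩ C).Nonempty} := by
  have h : MeasurableSet[kBorel X] {K : KSpace X | K.1 ⊆ Cᶜ} :=
    measurableSet_generateFrom ⟨Cᶜ, hC.isOpen_compl, Or.inl rfl⟩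
  have he : {K : KSpace X | (K.1 ∩ C).Nonempty} = {K : KSpace X | K.1 ⊆ Cᶜ}ᶜ := by
    ext K
    simp [Set.subset_compl_iff_disjoint_right, Set.disjoint_iff_inter_eq_empty,
      Set.nonempty_iff_ne_empty]
  rw [he]
  exact h.compl

/-- In a metric space, every open set is a countable union of closed sets. -/
lemma open_eq_iUnion_closed {X : Type*} [MetricSpace X] {U : Set X} (hU : IsOpen U) :
    ∃ F : ℕ → Set X, (∀ n, IsClosed (F n)) ∧ U = ⋃ n, F n := by
  refine ⟨fun n => {x | ∀ z ∈ Uᶜ, 1 / (n + 1 : ℝ) ≤ dist x z}, ?_, ?_⟩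
  · intro n
    show IsClosed {x : X | ∀ z ∈ Uᶜ, 1 / (n + 1 : ℝ) ≤ dist x z}
    have : {x : X | ∀ z ∈ Uᶜ, 1 / (n + 1 : ℝ) ≤ dist x z}
        = ⋂ z ∈ Uᶜ, {x | 1 / (n + 1 : ℝ) ≤ dist x z} := by
      ext x; simp
    rw [this]
    exact isClosed_biInter fun z _ =>
      isClosed_le continuous_const (continuous_id.dist continuous_const)
  · ext x
    simp only [mem_iUnion, mem_setOf_eq]
    constructor
    · intro hx
      obtain ⟨r, hr, hball⟩ := Metric.isOpen_iff.1 hU x hx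
      obtain ⟨n, hn⟩ := exists_nat_one_div_lt hr
      exact ⟨n, fun z hz => by
        by_contra h
        push_neg at h
        exact hz (hball (show dist z x < r by rw [dist_comm]; exact lt_trans h hn))⟩
    · rintro ⟨n, hn⟩
      by_contra hx
      have := hn x hx
      simp at this
      have : (0:ℝ) < 1 / (n + 1 : ℝ) := by positivity
      nlinarith [hn x hx, dist_self x]

/-- Hitting (closed ∩ open) is measurable for `kBorel`. -/
lemma kBorel_hit_closed_inter_open {X : Type*} [MetricSpace X] {C V : Set X}
    (hC : IsClosed C) (hV : IsOpen V) :
    MeasurableSet[kBorel X] {K : KSpace X | (K.1 ∩ (C ∩ V)).Nonempty} := by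
  obtain ⟨F, hFc, rfl⟩ := open_eq_iUnion_closed hV
  have he : {K : KSpace X | (K.1 ∩ (C ∩ ⋃ n, F n)).Nonempty}
      = ⋃ n, {K : KSpace X | (K.1 ∩ (C ∩ F n)).Nonempty} := by
    ext K
    simp only [mem_iUnion, mem_setOf_eq]
    constructor
    · rintro ⟨x, hxK, hxC, hxU⟩
      obtain ⟨n, hn⟩ := mem_iUnion.1 hxU
      exact ⟨n, x, hxK, hxC, hn⟩
    · rintro ⟨n, x, hxK, hxC, hn⟩
      exact ⟨x, hxK, hxC, mem_iUnion.2 ⟨n, hn⟩⟩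
  rw [he]
  exact MeasurableSet.iUnion fun n => kBorel_hit_closed (hC.inter (hFc n))

/-- Key lemma: for closed `C`, the set of pairs `(K, y)` with `K ∩ f⁻¹{y} ∩ C ≠ ∅`
is product-measurable. -/
lemma key_lemma {X Y : Type*} [MetricSpace X] [MetricSpace Y]
    (f : X → Y) (hf : Continuous f) (D : Set Y) (hDc : D.Countable)
    (hD : Set.range f ⊆ closure D)
    {C : Set X} (hC : IsClosed C) :
    MeasurableSet[@Prod.instMeasurableSpace _ _ (kBorel X) (borel Y)]
      {p : KSpace X × Y | (p.1.1 ∩ f ⁻¹' {p.2} ∩ C).Nonempty} := by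
  letI : MeasurableSpace (KSpace X) := kBorel X
  letI : MeasurableSpace Y := borel Y
  have he : {p : KSpace X × Y | (p.1.1 ∩ f ⁻¹' {p.2} ∩ C).Nonempty}
      = ⋂ m : ℕ, ⋃ d ∈ D, ⋃ q : ℚ,
          ({K : KSpace X | (K.1 ∩ (C ∩ f ⁻¹' (Metric.ball d (q : ℝ)))).Nonempty} ×ˢ
            {y : Y | dist y d + (q : ℝ) < 1 / (m + 1 : ℝ)}) := by
    ext ⟨K, y⟩
    simp only [mem_setOf_eq, mem_iInter, mem_iUnion, Set.mem_prod]
    constructor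
    · rintro ⟨x, ⟨hxK, hxf⟩, hxC⟩ m
      have hfx : f x = y := hxf
      have hy : y ∈ closure D := hfx ▸ hD ⟨x, rfl⟩
      have hpos : (0:ℝ) < 1 / (m + 1 : ℝ) / 2 := by positivity
      obtain ⟨d, hdD, hdy⟩ := Metric.mem_closure_iff.1 hy _ hpos
      have hlt : dist y d < 1 / (m + 1 : ℝ) - dist y d := by
        have := dist_nonneg (x := y) (y := d)
        linarith
      obtain ⟨q, hq1, hq2⟩ := exists_rat_btwn hlt
      refine ⟨d, hdD, q, ⟨x, hxK, hxC, ?_⟩, by linarith⟩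
      simp only [Set.mem_preimage, Metric.mem_ball, hfx]
      exact hq1
    · intro h
      have hKC : IsCompact (K.1 ∩ C) := K.2.inter_right hC
      have himg : IsClosed (f '' (K.1 ∩ C)) := (hKC.image hf).isClosed
      have hy : y ∈ closure (f '' (K.1 ∩ C)) := by
        rw [Metric.mem_closure_iff]
        intro ε hε
        obtain ⟨m, hm⟩ := exists_nat_one_div_lt hε
        obtain ⟨d, _, q, ⟨x, hxK, hxC, hxb⟩, hdy⟩ := h m
        refine ⟨f x, ⟨x, ⟨hxK, hxC⟩, rfl⟩, ?_⟩
        have h1 : dist (f x) d < (q : ℝ) := by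
          simpa [Metric.mem_ball] using hxb
        have h2 : dist y (f x) ≤ dist y d + dist d (f x) := dist_triangle _ _ _
        rw [dist_comm d (f x)] at h2
        linarith
      rw [himg.closure_eq] at hy
      obtain ⟨x, ⟨hxK, hxC⟩, hfx⟩ := hy
      exact ⟨x, ⟨hxK, hfx⟩, hxC⟩
  rw [he]
  refine MeasurableSet.iInter fun m => ?_
  refine MeasurableSet.biUnion hDc fun d _ => ?_
  refine MeasurableSet.iUnion fun q => ?_
  exact (kBorel_hit_closed_inter_open hC (Metric.isOpen_ball.preimage hf)).prod
    (measurableSet_generateFrom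
      (isOpen_lt ((continuous_id.dist continuous_const).add continuous_const)
        continuous_const))

/-- for a complete separable metric space `X`, a metric space `Y` and a
continuous `f : X → Y`, the map `K(X) × Y → K(X)`, `(K, y) ↦ K ∩ f⁻¹({y})`, is Borel. -/
theorem stmt_14 (X Y : Type*) [MetricSpace X] [CompleteSpace X]
    [TopologicalSpace.SeparableSpace X] [MetricSpace Y]
    (f : X → Y) (hf : Continuous f) :
    @Measurable (KSpace X × Y) (KSpace X)
      (@Prod.instMeasurableSpace _ _ (kBorel X) (borel Y)) (kBorel X)
      (fun p => ⟨p.1.1 ∩ f ⁻¹' {p.2},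
        p.1.2.inter_right ((isClosed_singleton).preimage hf)⟩) := by
  letI m : MeasurableSpace (KSpace X × Y) := @Prod.instMeasurableSpace _ _ (kBorel X) (borel Y)
  obtain ⟨D, hDc, hD⟩ := (TopologicalSpace.isSeparable_range hf)
  rw [kBorel]
  refine measurable_generateFrom ?_
  rintro A ⟨U, hU, (rfl | rfl)⟩
  · -- preimage of {K | K ⊆ U}
    have he : (fun p : KSpace X × Y => (⟨p.1.1 ∩ f ⁻¹' {p.2},
          p.1.2.inter_right ((isClosed_singleton).preimage hf)⟩ : KSpace X)) ⁻¹'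
            {K : KSpace X | K.1 ⊆ U}
        = {p : KSpace X × Y | (p.1.1 ∩ f ⁻¹' {p.2} ∩ Uᶜ).Nonempty}ᶜ := by
      ext p
      simp only [Set.mem_preimage, mem_setOf_eq, Set.mem_compl_iff]
      rw [Set.inter_compl_nonempty_iff]
      tauto
    refine (congrArg MeasurableSet he).mpr ?_
    exact (key_lemma f hf D hDc hD hU.isClosed_compl).compl
  · -- preimage of {K | (K ∩ U).Nonempty}
    obtain ⟨F, hFc, rfl⟩ := open_eq_iUnion_closed hU
    have he : (fun p : KSpace X × Y => (⟨p.1.1 ∩ f ⁻¹' {p.2},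
          p.1.2.inter_right ((isClosed_singleton).preimage hf)⟩ : KSpace X)) ⁻¹'
            {K : KSpace X | (K.1 ∩ ⋃ n, F n).Nonempty}
        = ⋃ n, {p : KSpace X × Y | (p.1.1 ∩ f ⁻¹' {p.2} ∩ F n).Nonempty} := by
      ext p
      simp only [Set.mem_preimage, mem_setOf_eq, mem_iUnion]
      constructor
      · rintro ⟨x, hx1, hxU⟩
        obtain ⟨n, hn⟩ := mem_iUnion.1 hxU
        exact ⟨n, x, hx1, hn⟩
      · rintro ⟨n, x, hx1, hn⟩
        exact ⟨x, hx1, mem_iUnion.2 ⟨n, hn⟩⟩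
    refine (congrArg MeasurableSet he).mpr ?_
    exact MeasurableSet.iUnion fun n => key_lemma f hf D hDc hD (hFc n)
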